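/- Let f : ℝ → ℝ be continuous on the closed interval [a, b] with a < b, and fix p ≥ 1. For each integer N ≥ p + 1 let h_N = (b − a)/(N − 1), define the samples f_N(n) = f(a + n h_N) for n = 0, …, N−1, and define the mean-square prediction error of the order-p difference-operator LP as E_N = (1/N) Σ_{n=p}^{N−1} (Δ^p f_N(n))², where Δ^p f_N(n) = Σ_{i=0}^{p} (−1)^i C(p,i) f_N(n−i). Then E_N → 0 as N → ∞; in particular, for every ε > 0 there exists N₀ such that E_N < ε for all N ≥ N₀. Thus the LP of fixed order p constructed by the difference operator approximates the samples of f with any prescribed precision once the sampling frequency is sufficiently high. -/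

import Mathlib

/-- Let `f` be continuous on `[a, b]`, fix the LP order `p ≥ 1`.
For `N ≥ p + 1`, sample `f` equidistantly: `f_N n = f (a + n h_N)` with `h_N = (b-a)/(N-1)`,
and let `E N = (1/N) ∑_{n=p}^{N-1} (Δ^p f_N n)²`, where
`Δ^p f_N n = ∑_{i=0}^p (-1)^i C(p,i) f_N (n - i)` is the prediction error of the order-`p`
difference-operator LP. Then `E N → 0` as `N → ∞`; in particular, for every `ε > 0` there is
`N₀` with `E N < ε` for all `N ≥ N₀`. -/
theorem diff_operator_lp_error_tendsto_zero
    (f : ℝ → ℝ) (a b : ℝ) (hab : a < b)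
    (hf : ContinuousOn f (Set.Icc a b)) (p : ℕ) (hp : 1 ≤ p)
    (E : ℕ → ℝ)
    (hE : ∀ N : ℕ, p + 1 ≤ N →
      E N = (1 / (N : ℝ)) * ∑ n ∈ Finset.Icc p (N - 1),
        (∑ i ∈ Finset.range (p + 1), (-1 : ℝ) ^ i * (p.choose i : ℝ) *
          f (a + ((n - i : ℕ) : ℝ) * ((b - a) / ((N : ℝ) - 1)))) ^ 2) :
    Filter.Tendsto E Filter.atTop (nhds 0) ∧
    ∀ ε > (0 : ℝ), ∃ N₀ : ℕ, ∀ N ≥ N₀, E N < ε := by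
  have key : ∀ ε > (0 : ℝ), ∃ N₀ : ℕ, ∀ N ≥ N₀, 0 ≤ E N ∧ E N < ε := by
    intro ε hε
    have hc : UniformContinuousOn f (Set.Icc a b) :=
      isCompact_Icc.uniformContinuousOn_of_continuous hf
    rw [Metric.uniformContinuousOn_iff] at hc
    set η : ℝ := Real.sqrt (ε / 2) / 2 ^ p with hη_def
    have hη : 0 < η := by
      apply div_pos (Real.sqrt_pos.mpr (by linarith)) (by positivity)
    obtain ⟨δ, hδ, hδf⟩ := hc η hη
    refine ⟨p + 2 + ⌈(p : ℝ) * (b - a) / δ⌉₊, fun N hN => ?_⟩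
    have hN1 : p + 1 ≤ N := by omega
    have hNR : (1 : ℝ) < (N : ℝ) := by
      have : 2 ≤ N := by omega
      exact_mod_cast by omega
    have hN1R : (0 : ℝ) < (N : ℝ) - 1 := by linarith
    set h : ℝ := (b - a) / ((N : ℝ) - 1) with hh_def
    have hh : 0 < h := div_pos (by linarith) hN1R
    -- p * h < δ
    have hph : (p : ℝ) * h < δ := by
      have hceil : ((p : ℝ) * (b - a) / δ) ≤ (⌈(p : ℝ) * (b - a) / δ⌉₊ : ℝ) := Nat.le_ceil _
      have hN1ge : (⌈(p : ℝ) * (b - a) / δ⌉₊ : ℝ) + 1 ≤ (N : ℝ) - 1 := by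
        have : ⌈(p : ℝ) * (b - a) / δ⌉₊ + 2 ≤ N := by omega
        have := (Nat.cast_le (α := ℝ)).mpr this
        push_cast at this ⊢
        linarith
      have h1 : (p : ℝ) * (b - a) / δ < (N : ℝ) - 1 := by linarith
      rw [hh_def, mul_div_assoc' ]
      rw [div_lt_iff₀ hN1R]
      rw [div_lt_iff₀ hδ] at h1
      linarith [h1]
    -- sample points lie in [a, b]
    have hx : ∀ m : ℕ, m ≤ N - 1 → a + (m : ℝ) * h ∈ Set.Icc a b := by
      intro m hm
      constructor
      · nlinarith [mul_nonneg (Nat.cast_nonneg (α := ℝ) m) hh.le]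
      · have hmR : (m : ℝ) ≤ (N : ℝ) - 1 := by
          have : (m : ℝ) ≤ ((N - 1 : ℕ) : ℝ) := Nat.cast_le.mpr hm
          have hcast : ((N - 1 : ℕ) : ℝ) = (N : ℝ) - 1 := by
            have : 1 ≤ N := by omega
            push_cast [this]; ring
          linarith [hcast ▸ this]
        have : (m : ℝ) * h ≤ ((N : ℝ) - 1) * h := by
          exact mul_le_mul_of_nonneg_right hmR hh.le
        have : ((N : ℝ) - 1) * h = b - a := by
          rw [hh_def]; field_simp
        nlinarith [mul_le_mul_of_nonneg_right hmR hh.le]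
    -- alternating binomial sum is zero
    have h0 : ∑ i ∈ Finset.range (p + 1), (-1 : ℝ) ^ i * (p.choose i : ℝ) = 0 := by
      have := Int.alternating_sum_range_choose (n := p)
      rw [if_neg (by omega)] at this
      have := congrArg (fun z : ℤ => (z : ℝ)) this
      push_cast at this
      convert this using 2
    -- per-term bound
    have hterm : ∀ n ∈ Finset.Icc p (N - 1),
        (∑ i ∈ Finset.range (p + 1), (-1 : ℝ) ^ i * (p.choose i : ℝ) *
          f (a + ((n - i : ℕ) : ℝ) * h)) ^ 2 ≤ ε / 2 := by
      intro n hn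
      rw [Finset.mem_Icc] at hn
      have hS : ∑ i ∈ Finset.range (p + 1), (-1 : ℝ) ^ i * (p.choose i : ℝ) *
            f (a + ((n - i : ℕ) : ℝ) * h)
          = ∑ i ∈ Finset.range (p + 1), (-1 : ℝ) ^ i * (p.choose i : ℝ) *
            (f (a + ((n - i : ℕ) : ℝ) * h) - f (a + (n : ℝ) * h)) := by
        rw [Finset.sum_congr rfl (fun i _ => by ring :
          ∀ i ∈ Finset.range (p + 1), (-1 : ℝ) ^ i * (p.choose i : ℝ) *
            (f (a + ((n - i : ℕ) : ℝ) * h) - f (a + (n : ℝ) * h))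
          = (-1 : ℝ) ^ i * (p.choose i : ℝ) * f (a + ((n - i : ℕ) : ℝ) * h)
            - (-1 : ℝ) ^ i * (p.choose i : ℝ) * f (a + (n : ℝ) * h))]
        rw [Finset.sum_sub_distrib, ← Finset.sum_mul, h0]
        ring
      have habs : |∑ i ∈ Finset.range (p + 1), (-1 : ℝ) ^ i * (p.choose i : ℝ) *
            f (a + ((n - i : ℕ) : ℝ) * h)| ≤ 2 ^ p * η := by
        rw [hS]
        calc |∑ i ∈ Finset.range (p + 1), (-1 : ℝ) ^ i * (p.choose i : ℝ) *
              (f (a + ((n - i : ℕ) : ℝ) * h) - f (a + (n : ℝ) * h))|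
            ≤ ∑ i ∈ Finset.range (p + 1), |((-1 : ℝ) ^ i * (p.choose i : ℝ) *
              (f (a + ((n - i : ℕ) : ℝ) * h) - f (a + (n : ℝ) * h)))| :=
              Finset.abs_sum_le_sum_abs _ _
          _ ≤ ∑ i ∈ Finset.range (p + 1), (p.choose i : ℝ) * η := by
              apply Finset.sum_le_sum
              intro i hi
              rw [Finset.mem_range] at hi
              have hip : i ≤ p := by omega
              have hin : i ≤ n := le_trans hip hn.1
              rw [abs_mul, abs_mul, abs_pow, abs_neg, abs_one, one_pow, one_mul,
                Nat.abs_cast]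
              apply mul_le_mul_of_nonneg_left _ (Nat.cast_nonneg _)
              have hd : dist (a + ((n - i : ℕ) : ℝ) * h) (a + (n : ℝ) * h) < δ := by
                rw [Real.dist_eq]
                have hc : ((n - i : ℕ) : ℝ) = (n : ℝ) - (i : ℝ) := by
                  push_cast [hin]; ring
                rw [hc]
                have : a + ((n : ℝ) - (i : ℝ)) * h - (a + (n : ℝ) * h) = -((i : ℝ) * h) := by ring
                rw [this, abs_neg, abs_of_nonneg (by positivity)]
                have : (i : ℝ) * h ≤ (p : ℝ) * h :=
                  mul_le_mul_of_nonneg_right (Nat.cast_le.mpr hip) hh.le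
                linarith
              have hmem1 : a + ((n - i : ℕ) : ℝ) * h ∈ Set.Icc a b := hx _ (by omega)
              have hmem2 : a + (n : ℝ) * h ∈ Set.Icc a b := hx _ hn.2
              have := hδf _ hmem1 _ hmem2 hd
              rw [Real.dist_eq] at this
              exact this.le
          _ = 2 ^ p * η := by
              rw [← Finset.sum_mul]
              congr 1
              have := Nat.sum_range_choose p
              have := congrArg (fun z : ℕ => (z : ℝ)) this
              push_cast at this
              exact this
      have h2 : (2 : ℝ) ^ p * η = Real.sqrt (ε / 2) := by
        rw [hη_def]; field_simp
      calc (∑ i ∈ Finset.range (p + 1), (-1 : ℝ) ^ i * (p.choose i : ℝ) *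
            f (a + ((n - i : ℕ) : ℝ) * h)) ^ 2
          ≤ (2 ^ p * η) ^ 2 := by
            rw [← sq_abs]
            exact pow_le_pow_left₀ (abs_nonneg _) habs 2
        _ = ε / 2 := by rw [h2, Real.sq_sqrt (by linarith)]
    -- combine
    rw [hE N hN1]
    constructor
    · apply mul_nonneg (by positivity)
      exact Finset.sum_nonneg fun n _ => sq_nonneg _
    · have hsum : ∑ n ∈ Finset.Icc p (N - 1),
          (∑ i ∈ Finset.range (p + 1), (-1 : ℝ) ^ i * (p.choose i : ℝ) *
            f (a + ((n - i : ℕ) : ℝ) * h)) ^ 2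
          ≤ (Finset.Icc p (N - 1)).card • (ε / 2) :=
        Finset.sum_le_card_nsmul _ _ _ hterm
      have hcard : ((Finset.Icc p (N - 1)).card : ℝ) ≤ (N : ℝ) := by
        rw [Nat.card_Icc]
        exact_mod_cast Nat.le_of_lt_succ (by omega : N - 1 + 1 - p < N + 1)
      have hcard' : ((Finset.Icc p (N - 1)).card : ℝ) * (ε / 2) ≤ (N : ℝ) * (ε / 2) :=
        mul_le_mul_of_nonneg_right hcard (by linarith)
      rw [nsmul_eq_mul] at hsum
      have hNpos : (0 : ℝ) < N := by linarith
      calc (1 / (N : ℝ)) * ∑ n ∈ Finset.Icc p (N - 1),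
            (∑ i ∈ Finset.range (p + 1), (-1 : ℝ) ^ i * (p.choose i : ℝ) *
              f (a + ((n - i : ℕ) : ℝ) * h)) ^ 2
          ≤ (1 / (N : ℝ)) * ((N : ℝ) * (ε / 2)) := by
            apply mul_le_mul_of_nonneg_left _ (by positivity)
            linarith
        _ = ε / 2 := by field_simp
        _ < ε := by linarith
  constructor
  · rw [Metric.tendsto_atTop]
    intro ε hε
    obtain ⟨N₀, hk⟩ := key ε hε
    exact ⟨N₀, fun N hN => by
      rw [Real.dist_eq, sub_zero, abs_of_nonneg (hk N hN).1]
      exact (hk N hN).2⟩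
  · intro ε hε
    obtain ⟨N₀, hk⟩ := key ε hε
    exact ⟨N₀, fun N hN => (hk N hN).2⟩
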